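/- For any C¹ function h with h(0)=0 and h'(y) > 0, and parameters α > m > 0, β > 0, the prey nullcline y = (1−x)(β+x) restricted to 0 < x < 1 intersects the predator nullcline x = mβ/(αh(y) − m) in at most two points; equivalently, the system has at most two interior equilibria. -/

import Mathlib

open Set

private lemma encard_le_two_of (s : Set ℝ)
    (H : ∀ a b c, a ∈ s → b ∈ s → c ∈ s → a = b ∨ a = c ∨ b = c) :
    s.encard ≤ 2 := by
  by_cases hs : ∃ a ∈ s, ∃ b ∈ s, a ≠ b
  · obtain ⟨a, ha, b, hb, hab⟩ := hs
    have hsub : s ⊆ {a, b} := by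
      intro c hc
      rcases H a b c ha hb hc with h1 | h2 | h3
      · exact absurd h1 hab
      · exact Or.inl h2.symm
      · exact Or.inr h3.symm
    calc s.encard ≤ ({a, b} : Set ℝ).encard := Set.encard_mono hsub
      _ = 2 := Set.encard_pair hab
  · push_neg at hs
    have : s.encard ≤ 1 := Set.encard_le_one_iff.2 fun x y hx hy => hs x hx y hy
    exact this.trans (by norm_num)

theorem stmt6 (h h' h'' : ℝ → ℝ) (α β m : ℝ)
    (hm : 0 < m) (hαm : m < α) (hβ : 0 < β)
    (h0 : h 0 = 0)
    (hd1 : ∀ y, 0 ≤ y → HasDerivAt h (h' y) y)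
    (hd2 : ∀ y, 0 ≤ y → HasDerivAt h' (h'' y) y)
    (hpos : ∀ y, 0 ≤ y → 0 < h' y)
    (hneg : ∀ y, 0 ≤ y → h'' y < 0) :
    Set.encard {p : ℝ × ℝ | 0 < p.1 ∧ p.1 < 1 ∧ 0 < p.2 ∧
      p.2 = (1 - p.1) * (β + p.1) ∧
      α * p.1 * h p.2 / (p.1 + β) = m} ≤ 2 := by
  have hα : 0 < α := hm.trans hαm
  set S : Set (ℝ × ℝ) := {p : ℝ × ℝ | 0 < p.1 ∧ p.1 < 1 ∧ 0 < p.2 ∧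
      p.2 = (1 - p.1) * (β + p.1) ∧
      α * p.1 * h p.2 / (p.1 + β) = m} with hS
  -- The function whose zeros on (0,1) are the x-coordinates of equilibria
  set G : ℝ → ℝ := fun x => h ((1 - x) * (β + x)) - m * (x + β) / (α * x) with hG
  set G1 : ℝ → ℝ := fun x => h' ((1 - x) * (β + x)) * (1 - β - 2 * x)
      + m * β / (α * x ^ 2) with hG1
  set T : Set ℝ := {x | 0 < x ∧ x < 1 ∧ G x = 0} with hT
  -- basic positivity
  have hp_pos : ∀ x : ℝ, 0 < x → x < 1 → 0 < (1 - x) * (β + x) := by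
    intro x hx0 hx1
    exact mul_pos (by linarith) (by linarith)
  -- derivative of G
  have hderivG : ∀ x : ℝ, 0 < x → x < 1 → HasDerivAt G (G1 x) x := by
    intro x hx0 hx1
    have hxne : α * x ≠ 0 := by positivity
    have hpx : (0:ℝ) ≤ (1 - x) * (β + x) := (hp_pos x hx0 hx1).le
    have hp' : HasDerivAt (fun x : ℝ => (1 - x) * (β + x)) (1 - β - 2 * x) x := by
      have := (((hasDerivAt_id x).const_sub 1).mul ((hasDerivAt_id x).const_add β))
      refine this.congr_deriv ?_
      simp only [id_eq]
      ring
    have hcomp : HasDerivAt (fun x : ℝ => h ((1 - x) * (β + x)))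
        (h' ((1 - x) * (β + x)) * (1 - β - 2 * x)) x :=
      (hd1 _ hpx).comp x hp'
    have hnum : HasDerivAt (fun x : ℝ => m * (x + β)) m x := by
      have := ((hasDerivAt_id x).add_const β).const_mul m
      simpa using this
    have hden : HasDerivAt (fun x : ℝ => α * x) α x := by
      simpa using (hasDerivAt_id x).const_mul α
    have hdiv : HasDerivAt (fun x : ℝ => m * (x + β) / (α * x))
        ((m * (α * x) - m * (x + β) * α) / (α * x) ^ 2) x := hnum.div hden hxne
    have := hcomp.sub hdiv
    refine this.congr_deriv ?_
    rw [hG1]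
    have hx2 : (α * x) ^ 2 ≠ 0 := pow_ne_zero _ hxne
    field_simp
    ring
  -- derivative of G1
  have hderivG1 : ∀ x : ℝ, 0 < x → x < 1 →
      HasDerivAt G1 (h'' ((1 - x) * (β + x)) * (1 - β - 2 * x) ^ 2
        - 2 * h' ((1 - x) * (β + x)) - 2 * m * β / (α * x ^ 3)) x := by
    intro x hx0 hx1
    have hpx : (0:ℝ) ≤ (1 - x) * (β + x) := (hp_pos x hx0 hx1).le
    have hp' : HasDerivAt (fun x : ℝ => (1 - x) * (β + x)) (1 - β - 2 * x) x := by
      have := (((hasDerivAt_id x).const_sub 1).mul ((hasDerivAt_id x).const_add β))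
      refine this.congr_deriv ?_
      simp only [id_eq]
      ring
    have hcomp : HasDerivAt (fun x : ℝ => h' ((1 - x) * (β + x)))
        (h'' ((1 - x) * (β + x)) * (1 - β - 2 * x)) x :=
      (hd2 _ hpx).comp x hp'
    have hlin : HasDerivAt (fun x : ℝ => 1 - β - 2 * x) (-2) x := by
      have := ((hasDerivAt_id x).const_mul 2).const_sub (1 - β)
      simpa using this
    have hprod := hcomp.mul hlin
    have hxne : α * x ^ 2 ≠ 0 := by positivity
    have hden : HasDerivAt (fun x : ℝ => α * x ^ 2) (α * (2 * x)) x := by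
      have := ((hasDerivAt_pow 2 x)).const_mul α
      refine this.congr_deriv ?_
      ring
    have hdiv : HasDerivAt (fun x : ℝ => m * β / (α * x ^ 2))
        ((0 * (α * x ^ 2) - m * β * (α * (2 * x))) / (α * x ^ 2) ^ 2) x :=
      (hasDerivAt_const x (m * β)).div hden hxne
    have := hprod.add hdiv
    refine this.congr_deriv ?_
    have hx2 : (α * x ^ 2) ^ 2 ≠ 0 := pow_ne_zero _ hxne
    field_simp
    ring
  -- the second derivative is negative on (0,1)
  have hG2neg : ∀ x : ℝ, 0 < x → x < 1 →
      h'' ((1 - x) * (β + x)) * (1 - β - 2 * x) ^ 2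
        - 2 * h' ((1 - x) * (β + x)) - 2 * m * β / (α * x ^ 3) < 0 := by
    intro x hx0 hx1
    have hpx : (0:ℝ) ≤ (1 - x) * (β + x) := (hp_pos x hx0 hx1).le
    have h1 : h'' ((1 - x) * (β + x)) * (1 - β - 2 * x) ^ 2 ≤ 0 :=
      mul_nonpos_of_nonpos_of_nonneg (hneg _ hpx).le (sq_nonneg _)
    have h2 : 0 < h' ((1 - x) * (β + x)) := hpos _ hpx
    have h3 : 0 < 2 * m * β / (α * x ^ 3) := by positivity
    linarith
  -- no three distinct zeros of G in (0,1)
  have key : ∀ x₁ x₂ x₃ : ℝ, x₁ ∈ T → x₂ ∈ T → x₃ ∈ T → x₁ < x₂ → x₂ < x₃ → False := by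
    intro x₁ x₂ x₃ h1 h2 h3 h12 h23
    obtain ⟨hx1, hx1', hz1⟩ := h1
    obtain ⟨hx2, hx2', hz2⟩ := h2
    obtain ⟨hx3, hx3', hz3⟩ := h3
    have hmemG : ∀ x ∈ Icc x₁ x₃, HasDerivAt G (G1 x) x := by
      intro x hx
      exact hderivG x (lt_of_lt_of_le hx1 hx.1) (lt_of_le_of_lt hx.2 hx3')
    have hcontG : ContinuousOn G (Icc x₁ x₃) := fun x hx =>
      ((hmemG x hx).continuousAt).continuousWithinAt
    obtain ⟨c₁, hc₁, hc₁'⟩ := exists_hasDerivAt_eq_zero h12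
      (hcontG.mono (Icc_subset_Icc le_rfl h23.le)) (hz1.trans hz2.symm)
      (fun x hx => hmemG x ⟨hx.1.le, hx.2.le.trans h23.le⟩)
    obtain ⟨c₂, hc₂, hc₂'⟩ := exists_hasDerivAt_eq_zero h23
      (hcontG.mono (Icc_subset_Icc h12.le le_rfl)) (hz2.trans hz3.symm)
      (fun x hx => hmemG x ⟨h12.le.trans hx.1.le, hx.2.le⟩)
    have hc12 : c₁ < c₂ := hc₁.2.trans hc₂.1
    have hmemG1 : ∀ x ∈ Icc c₁ c₂, HasDerivAt G1
        (h'' ((1 - x) * (β + x)) * (1 - β - 2 * x) ^ 2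
          - 2 * h' ((1 - x) * (β + x)) - 2 * m * β / (α * x ^ 3)) x := by
      intro x hx
      exact hderivG1 x (lt_of_lt_of_le (hx1.trans hc₁.1) hx.1)
        (lt_of_le_of_lt hx.2 (hc₂.2.trans hx3'))
    have hcontG1 : ContinuousOn G1 (Icc c₁ c₂) := fun x hx =>
      ((hmemG1 x hx).continuousAt).continuousWithinAt
    obtain ⟨c, hc, hc'⟩ := exists_hasDerivAt_eq_zero hc12 hcontG1 (hc₁'.trans hc₂'.symm)
      (fun x hx => hmemG1 x ⟨hx.1.le, hx.2.le⟩)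
    have := hG2neg c (hx1.trans (hc₁.1.trans hc.1)) ((hc.2.trans hc₂.2).trans hx3')
    rw [hc'] at this
    exact lt_irrefl 0 this
  -- x-coordinates of equilibria are zeros of G
  have hmapsto : ∀ p ∈ S, p.1 ∈ T := by
    rintro ⟨x, y⟩ ⟨hx0, hx1, hy0, hy, heq⟩
    refine ⟨hx0, hx1, ?_⟩
    have hxβ : x + β ≠ 0 := by positivity
    have hxne : α * x ≠ 0 := by positivity
    have : α * x * h y = m * (x + β) := by
      field_simp at heq
      linarith [heq]
    have hy' : h ((1 - x) * (β + x)) = m * (x + β) / (α * x) := by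
      rw [← hy]
      field_simp
      linarith [this]
    simp only [hG, hy', sub_self]
  have hinj : Set.InjOn Prod.fst S := by
    rintro ⟨x, y⟩ ⟨hx0, hx1, hy0, hy, _⟩ ⟨x', y'⟩ ⟨hx0', hx1', hy0', hy', _⟩ hxy
    simp only at hxy
    subst hxy
    have : y = y' := hy.trans hy'.symm
    rw [this]
  calc S.encard = (Prod.fst '' S).encard := (Set.InjOn.encard_image hinj).symm
    _ ≤ T.encard := Set.encard_mono (by rintro _ ⟨p, hp, rfl⟩; exact hmapsto p hp)
    _ ≤ 2 := by
        apply encard_le_two_of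
        intro a b c ha hb hc
        by_contra hcon
        push_neg at hcon
        obtain ⟨hab, hac, hbc⟩ := hcon
        rcases lt_trichotomy a b with h1 | h1 | h1
        · rcases lt_trichotomy b c with h2 | h2 | h2
          · exact key a b c ha hb hc h1 h2
          · exact hbc h2
          · rcases lt_trichotomy a c with h3 | h3 | h3
            · exact key a c b ha hc hb h3 h2
            · exact hac h3
            · exact key c a b hc ha hb h3 h1
        · exact hab h1
        · rcases lt_trichotomy a c with h2 | h2 | h2
          · exact key b a c hb ha hc h1 h2
          · exact hac h2
          · rcases lt_trichotomy b c with h3 | h3 | h3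
            · exact key b c a hb hc ha h3 h2
            · exact hbc h3
            · exact key c b a hc hb ha h3 h1
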